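/- Let F be a functor from rings to a category 𝔇 and let A be a ring. Assume F is M₂-stable on both A and M₂A. Then the two corner inclusions ι₀, ι₁ : A → M₂A, ι₀(a) = a·e₁₁ and ι₁(a) = a·e₂₂, induce the same isomorphism F(A) → F(M₂A). -/

import Mathlib

/-!
Statement 0.  Let `F` be a functor from rings to a category `𝔇` and let `A` be
a ring.  Assume `F` is `M₂`-stable on both `A` and `M₂A` (i.e. `F` sends the
corner inclusion `ι₀ : B → M₂B`, `b ↦ b·e₁₁`, to an isomorphism for `B = A`
and `B = M₂A`).  Then the two corner inclusions `ι₀, ι₁ : A → M₂A`,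
`ι₀(a) = a·e₁₁` and `ι₁(a) = a·e₂₂`, induce the same isomorphism
`F(A) → F(M₂A)`.

Here "rings" means not necessarily unital rings with (not necessarily unital)
ring homomorphisms.
-/

set_option autoImplicit false
noncomputable section

open CategoryTheory

/-- `M₂A`: the ring of 2×2 matrices over `A`. -/
abbrev M2 (A : Type) [NonUnitalRing A] : Type := Matrix (Fin 2) (Fin 2) A

/-- The corner inclusion `ι₀ : A → M₂A`, `a ↦ a·e₁₁`. -/
def iota0 (A : Type) [NonUnitalRing A] : A →ₙ+* M2 A where
  toFun a := Matrix.single 0 0 a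
  map_mul' := by
    intro a b
    simpa using (Matrix.single_mul_single_same (i := (0 : Fin 2)) (j := 0) (k := (0 : Fin 2)) (c := a) (d := b)).symm
  map_zero' := by simp
  map_add' := by intro a b; ext i j; simp [Matrix.single]; aesop

/-- The corner inclusion `ι₁ : A → M₂A`, `a ↦ a·e₂₂`. -/
def iota1 (A : Type) [NonUnitalRing A] : A →ₙ+* M2 A where
  toFun a := Matrix.single 1 1 a
  map_mul' := by
    intro a b
    simpa using (Matrix.single_mul_single_same (i := (1 : Fin 2)) (j := 1) (k := (1 : Fin 2)) (c := a) (d := b)).symm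
  map_zero' := by simp
  map_add' := by intro a b; ext i j; simp [Matrix.single]; aesop

/-- A functor from the category of (not necessarily unital) rings to a
category `𝔇`. -/
structure RingFunctor (D : Type*) [Category D] where
  obj : (A : Type) → [NonUnitalRing A] → D
  map : {A B : Type} → [NonUnitalRing A] → [NonUnitalRing B] →
    (A →ₙ+* B) → (obj A ⟶ obj B)
  map_id : ∀ (A : Type) [NonUnitalRing A],
    map (NonUnitalRingHom.id A) = 𝟙 (obj A)
  map_comp : ∀ {A B C : Type} [NonUnitalRing A] [NonUnitalRing B]
    [NonUnitalRing C] (f : A →ₙ+* B) (g : B →ₙ+* C),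
    map (g.comp f) = map f ≫ map g

/-- `F` is `M₂`-stable on `A` if it sends the corner inclusion
`ι₀ : A → M₂A` to an isomorphism. -/
def RingFunctor.M2Stable {D : Type*} [Category D] (F : RingFunctor D)
    (A : Type) [NonUnitalRing A] : Prop :=
  IsIso (F.map (iota0 A))

namespace CornerAux

variable (A : Type) [NonUnitalRing A]

abbrev N4 : Type := Matrix (Fin 2 × Fin 2) (Fin 2 × Fin 2) A

/-- reindexing automorphism as a non-unital ring hom -/
def gamma (σ : (Fin 2 × Fin 2) ≃ (Fin 2 × Fin 2)) : N4 A →ₙ+* N4 A where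
  toFun M := M.submatrix σ σ
  map_mul' M N := (Matrix.submatrix_mul_equiv M N σ σ σ).symm
  map_zero' := rfl
  map_add' _ _ := rfl

def s2 : M2 A →ₙ+* M2 A where
  toFun M := M.submatrix (Equiv.swap 0 1) (Equiv.swap 0 1)
  map_mul' M N := (Matrix.submatrix_mul_equiv M N (Equiv.swap 0 1) (Equiv.swap 0 1) (Equiv.swap 0 1)).symm
  map_zero' := rfl
  map_add' _ _ := rfl

def toFlat : M2 (M2 A) →ₙ+* N4 A where
  toFun X := Matrix.of fun p q => X p.1 q.1 p.2 q.2
  map_mul' X Y := by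
    ext p q
    simp [Matrix.mul_apply, Matrix.sum_apply, Fintype.sum_prod_type]
  map_zero' := rfl
  map_add' _ _ := rfl

def toNest : N4 A →ₙ+* M2 (M2 A) where
  toFun M := Matrix.of fun i j => Matrix.of fun k l => M (i, k) (j, l)
  map_mul' M N := by
    ext i j k l
    show (M * N) (i,k) (j,l) = _
    simp [Matrix.mul_apply, Matrix.sum_apply, Fintype.sum_prod_type, Fin.sum_univ_two]
  map_zero' := rfl
  map_add' _ _ := rfl

lemma nest_flat : (toNest A).comp (toFlat A) = NonUnitalRingHom.id _ := by
  ext M; rfl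

lemma flat_nest : (toFlat A).comp (toNest A) = NonUnitalRingHom.id _ := by
  ext M; rfl

lemma gamma_comp (σ τ : (Fin 2 × Fin 2) ≃ (Fin 2 × Fin 2)) :
    (gamma A σ).comp (gamma A τ) = gamma A (σ.trans τ) := by
  ext M; rfl

lemma gamma_refl : gamma A (Equiv.refl _) = NonUnitalRingHom.id _ := by
  ext M; rfl

def pOuter : (Fin 2 × Fin 2) ≃ (Fin 2 × Fin 2) :=
  Equiv.prodCongr (Equiv.swap 0 1) (Equiv.refl _)

def pInner : (Fin 2 × Fin 2) ≃ (Fin 2 × Fin 2) :=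
  Equiv.prodCongr (Equiv.refl _) (Equiv.swap 0 1)

def p23 : (Fin 2 × Fin 2) ≃ (Fin 2 × Fin 2) :=
  Equiv.swap ((1 : Fin 2), (0 : Fin 2)) (1, 1)

def p01 : (Fin 2 × Fin 2) ≃ (Fin 2 × Fin 2) :=
  Equiv.swap ((0 : Fin 2), (0 : Fin 2)) (0, 1)

lemma e1 : (pOuter).trans ((p23).trans (pOuter)) = p01 := by
  apply Equiv.ext; decide

lemma e2 : (pOuter).trans (pOuter) = Equiv.refl _ := by
  apply Equiv.ext; decide

lemma e3 : (p01).trans (p23) = pInner := by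
  apply Equiv.ext; decide

/-- The corner embedding `M₂A → M₂(M₂A) → N4 A`. -/
def J : M2 A →ₙ+* N4 A := (toFlat A).comp (iota0 (M2 A))

lemma J_apply (M : M2 A) (p q : Fin 2 × Fin 2) :
    J A M p q = if p.1 = 0 ∧ q.1 = 0 then M p.2 q.2 else 0 := by
  rcases p with ⟨b, s⟩; rcases q with ⟨b', s'⟩
  show Matrix.single (0 : Fin 2) 0 M b b' s s' = _
  fin_cases b <;> fin_cases b' <;>
    simp [Matrix.single]

lemma J_p23 : (gamma A p23).comp (J A) = J A := by
  ext M : 1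
  ext ⟨b, s⟩ ⟨b', s'⟩
  show (J A M).submatrix (p23) (p23) (b, s) (b', s') = J A M (b, s) (b', s')
  rw [Matrix.submatrix_apply, J_apply, J_apply]
  fin_cases b <;> fin_cases b' <;> fin_cases s <;> fin_cases s' <;>
    simp [p23, Equiv.swap_apply_def, -Prod.mk_zero_zero, -Prod.mk_one_one, Prod.ext_iff]

lemma J_inner : (gamma A pInner).comp (J A) = (J A).comp (s2 A) := by
  ext M : 1
  ext ⟨b, s⟩ ⟨b', s'⟩
  show (J A M).submatrix (pInner) (pInner) (b, s) (b', s')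
      = J A (M.submatrix (Equiv.swap 0 1) (Equiv.swap 0 1)) (b, s) (b', s')
  rw [Matrix.submatrix_apply, J_apply, J_apply]
  fin_cases b <;> fin_cases b' <;> fin_cases s <;> fin_cases s' <;>
    simp [pInner, Equiv.swap_apply_def, -Prod.mk_zero_zero, -Prod.mk_one_one, Prod.ext_iff]

lemma iota1_eq : iota1 A = (s2 A).comp (iota0 A) := by
  ext a : 1
  ext i j
  show Matrix.single (1 : Fin 2) 1 a i j
      = (Matrix.single (0 : Fin 2) 0 a).submatrix (Equiv.swap 0 1) (Equiv.swap 0 1) i j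
  fin_cases i <;> fin_cases j <;> simp [Matrix.single, Equiv.swap_apply_def]

end CornerAux

theorem corner_inclusions_induce_same_isomorphism
    {D : Type*} [Category D] (F : RingFunctor D)
    (A : Type) [NonUnitalRing A]
    (h₁ : F.M2Stable A) (h₂ : F.M2Stable (M2 A)) :
    F.map (iota1 A) = F.map (iota0 A) ∧ IsIso (F.map (iota0 A)) := by
  open CornerAux in
  refine ⟨?_, h₁⟩
  haveI hU : IsIso (F.map (iota0 (M2 A))) := h₂
  haveI hflat : IsIso (F.map (toFlat A)) := by
    refine ⟨F.map (toNest A), ?_, ?_⟩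
    · rw [← F.map_comp, nest_flat, F.map_id]
    · rw [← F.map_comp, flat_nest, F.map_id]
  haveI hJ : IsIso (F.map (J A)) := by
    rw [show J A = (toFlat A).comp (iota0 (M2 A)) from rfl, F.map_comp]
    infer_instance
  -- F(γ p23) = 1
  have h23 : F.map (gamma A p23) = 𝟙 _ := by
    have h := congrArg F.map (J_p23 A)
    rw [F.map_comp] at h
    exact (cancel_epi (F.map (J A))).mp (h.trans (Category.comp_id _).symm)
  -- F(γ pOuter) squares to 1
  have hdd : F.map (gamma A pOuter) ≫ F.map (gamma A pOuter) = 𝟙 _ := by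
    rw [← F.map_comp, gamma_comp, e2, gamma_refl, F.map_id]
  -- F(γ p01) = 1
  have h01 : F.map (gamma A p01) = 𝟙 _ := by
    have hdecomp : gamma A p01
        = (gamma A pOuter).comp ((gamma A p23).comp (gamma A pOuter)) := by
      rw [gamma_comp, gamma_comp, e1]
    rw [hdecomp, F.map_comp, F.map_comp, h23, Category.comp_id]
    exact hdd
  -- F(γ pInner) = 1
  have hIn : F.map (gamma A pInner) = 𝟙 _ := by
    have hdecomp : gamma A pInner = (gamma A p01).comp (gamma A p23) := by
      rw [gamma_comp, e3]
    rw [hdecomp, F.map_comp, h23, h01, Category.comp_id]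
  -- F(s2) = 1
  have hs2 : F.map (s2 A) = 𝟙 _ := by
    have h := congrArg F.map (J_inner A)
    rw [F.map_comp, F.map_comp, hIn, Category.comp_id] at h
    have h' : 𝟙 _ ≫ F.map (J A) = F.map (s2 A) ≫ F.map (J A) := by
      rw [Category.id_comp]; exact h
    exact ((cancel_mono (F.map (J A))).mp h').symm
  rw [iota1_eq, F.map_comp, hs2, Category.comp_id]


end
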